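/- arXiv:2005.03800 — 4 statements merged into one kernel-verified Lean document; each statement's English description precedes it below -/
import Mathlib

section
/- For any positive integer ℓ and nonnegative integer d with d < ℓ, the excess imbalance (∑_{j=1}^{ℓ} |d + ℓ + 1 - 2j|) - ⌊ℓ²/2⌋ equals ⌊d²/2⌋ if ℓ is even, and ⌈d²/2⌉ if ℓ is odd. -/
lemma aux_gauss (n : ℕ) : ∑ j ∈ Finset.Ioc 0 n, (2*(j:ℤ)) = n*(n+1) := by
  induction n with
  | zero => simp
  | succ n ih =>
    rw [Finset.sum_Ioc_succ_top (Nat.zero_le _), ih]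
    push_cast; ring

theorem stmt_6 (ℓ d : ℕ) (hpos : 0 < ℓ) (hdl : d < ℓ) :
    (∑ j ∈ Finset.Icc 1 ℓ, |(d : ℤ) + (ℓ : ℤ) + 1 - 2 * (j : ℤ)|) - (ℓ : ℤ) ^ 2 / 2 =
      if Even ℓ then (d : ℤ) ^ 2 / 2 else ((d : ℤ) ^ 2 + 1) / 2 := by
  set k := (d + ℓ) / 2 with hk
  have h1 : 2 * k ≤ d + ℓ := by omega
  have h2 : d + ℓ ≤ 2 * k + 1 := by omega
  have hkℓ : k ≤ ℓ := by omega
  rw [show (1:ℕ) = 0 + 1 from rfl, Finset.Icc_add_one_left_eq_Ioc,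
    ← Finset.sum_Ioc_consecutive _ (Nat.zero_le k) hkℓ]
  have hA : ∑ j ∈ Finset.Ioc 0 k, |(d : ℤ) + (ℓ : ℤ) + 1 - 2 * (j : ℤ)|
      = ∑ j ∈ Finset.Ioc 0 k, ((d : ℤ) + (ℓ : ℤ) + 1 - 2 * (j : ℤ)) := by
    refine Finset.sum_congr rfl fun j hj => abs_of_nonneg ?_
    rw [Finset.mem_Ioc] at hj
    omega
  have hB : ∑ j ∈ Finset.Ioc k ℓ, |(d : ℤ) + (ℓ : ℤ) + 1 - 2 * (j : ℤ)|
      = ∑ j ∈ Finset.Ioc k ℓ, (2 * (j : ℤ) - ((d : ℤ) + (ℓ : ℤ) + 1)) := by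
    refine Finset.sum_congr rfl fun j hj => ?_
    rw [Finset.mem_Ioc] at hj
    rw [abs_of_nonpos (by omega)]; ring
  rw [hA, hB, Finset.sum_sub_distrib, Finset.sum_sub_distrib, Finset.sum_const,
    Finset.sum_const, Nat.card_Ioc, Nat.card_Ioc, aux_gauss,
    show ∑ j ∈ Finset.Ioc k ℓ, (2*(j:ℤ)) = ℓ*(ℓ+1) - k*(k+1) by
      rw [← aux_gauss ℓ, ← aux_gauss k, ← Finset.sum_Ioc_consecutive _ (Nat.zero_le k) hkℓ]; ring]
  rw [Nat.sub_zero, nsmul_eq_mul, nsmul_eq_mul, Nat.cast_sub hkℓ]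
  rcases Nat.even_or_odd ℓ with ⟨m, hm⟩ | ⟨m, hm⟩ <;>
    rcases Nat.even_or_odd d with ⟨e, he⟩ | ⟨e, he⟩
  · rw [if_pos ⟨m, by omega⟩]
    have hke : k = e + m := by omega
    have hd2 : ((d:ℤ))^2 / 2 = 2*(e:ℤ)^2 := by
      rw [show ((d:ℤ))^2 = 2*(2*(e:ℤ)^2) by push_cast [he]; ring]
      exact Int.mul_ediv_cancel_left _ two_ne_zero
    have hl2 : ((ℓ:ℤ))^2 / 2 = 2*(m:ℤ)^2 := by
      rw [show ((ℓ:ℤ))^2 = 2*(2*(m:ℤ)^2) by push_cast [hm]; ring]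
      exact Int.mul_ediv_cancel_left _ two_ne_zero
    rw [hd2, hl2]
    push_cast [he, hm, hke]
    ring
  · rw [if_pos ⟨m, by omega⟩]
    have hke : k = e + m := by omega
    have hd2 : ((d:ℤ))^2 / 2 = 2*(e:ℤ)^2 + 2*e := by
      rw [show ((d:ℤ))^2 = 1 + 2*(2*(e:ℤ)^2 + 2*e) by push_cast [he]; ring,
        Int.add_mul_ediv_left _ _ two_ne_zero]
      norm_num
    have hl2 : ((ℓ:ℤ))^2 / 2 = 2*(m:ℤ)^2 := by
      rw [show ((ℓ:ℤ))^2 = 2*(2*(m:ℤ)^2) by push_cast [hm]; ring]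
      exact Int.mul_ediv_cancel_left _ two_ne_zero
    rw [hd2, hl2]
    push_cast [he, hm, hke]
    ring
  · rw [if_neg (by rintro ⟨r, hr⟩; omega)]
    have hke : k = e + m := by omega
    have hd2 : (((d:ℤ))^2 + 1) / 2 = 2*(e:ℤ)^2 := by
      rw [show ((d:ℤ))^2 + 1 = 2*(2*(e:ℤ)^2) + 1 by push_cast [he]; ring]
      omega
    have hl2 : ((ℓ:ℤ))^2 / 2 = 2*(m:ℤ)^2 + 2*m := by
      rw [show ((ℓ:ℤ))^2 = 1 + 2*(2*(m:ℤ)^2 + 2*m) by push_cast [hm]; ring,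
        Int.add_mul_ediv_left _ _ two_ne_zero]
      norm_num
    rw [hd2, hl2]
    push_cast [he, hm, hke]
    ring
  · rw [if_neg (by rintro ⟨r, hr⟩; omega)]
    have hke : k = e + m + 1 := by omega
    have hd2 : (((d:ℤ))^2 + 1) / 2 = 2*(e:ℤ)^2 + 2*e + 1 := by
      rw [show ((d:ℤ))^2 + 1 = 2*(2*(e:ℤ)^2 + 2*e + 1) by push_cast [he]; ring]
      omega
    have hl2 : ((ℓ:ℤ))^2 / 2 = 2*(m:ℤ)^2 + 2*m := by
      rw [show ((ℓ:ℤ))^2 = 1 + 2*(2*(m:ℤ)^2 + 2*m) by push_cast [hm]; ring,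
        Int.add_mul_ediv_left _ _ two_ne_zero]
      norm_num
    rw [hd2, hl2]
    push_cast [he, hm, hke]
    ring
end

section
/- Let G be a connected graph consisting of a single vertex v adjacent to all vertices of r disjoint cliques C_1, ..., C_r of sizes a_1, ..., a_r (no edges between distinct cliques). Then the minimum imbalance of G over all vertex orderings equals ∑_{i=1}^r (⌊a_i²/2⌋ + (a_i mod 2)) + min_{A⊆[r]} |∑_{i∈A} a_i − ∑_{i∉A} a_i|. -/
/-- Number of neighbors of `v` preceding `v` in the ordering `σ`. -/
noncomputable def predCount {V : Type*} [Fintype V] (G : SimpleGraph V)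
    (σ : V ≃ Fin (Fintype.card V)) (v : V) : ℕ :=
  Nat.card {u : V // G.Adj v u ∧ σ u < σ v}

/-- Number of neighbors of `v` following `v` in the ordering `σ`. -/
noncomputable def succCount {V : Type*} [Fintype V] (G : SimpleGraph V)
    (σ : V ≃ Fin (Fintype.card V)) (v : V) : ℕ :=
  Nat.card {u : V // G.Adj v u ∧ σ v < σ u}

/-- The imbalance of the ordering `σ`. -/
noncomputable def imbalance {V : Type*} [Fintype V] (G : SimpleGraph V)
    (σ : V ≃ Fin (Fintype.card V)) : ℤ :=
  ∑ v : V, |(predCount G σ v : ℤ) - (succCount G σ v : ℤ)|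

/-- The graph consisting of an apex vertex `none` joined completely to `r`
vertex-disjoint cliques of sizes `a 0, …, a (r-1)`, with no edges between
distinct cliques. -/
def apexCliques (r : ℕ) (a : Fin r → ℕ) :
    SimpleGraph (Option (Σ i : Fin r, Fin (a i))) :=
  SimpleGraph.fromRel fun x y =>
    x = none ∨ ∃ (i : Fin r) (p q : Fin (a i)), x = some ⟨i, p⟩ ∧ y = some ⟨i, q⟩

namespace Stmt11Aux

open Finset Function

/-! ### Arithmetic lemmas -/

/-- Per-clique contribution with `k` vertices before the apex. -/
def Scl (a k : ℕ) : ℤ :=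
  ∑ j ∈ range a, if j < k then |2*(j:ℤ) - a| else |2*(j:ℤ) + 2 - a|

def Tcl (a : ℕ) : ℤ := ∑ j ∈ range a, |2*(j:ℤ) + 2 - a|

lemma Scl_zero (a : ℕ) : Scl a 0 = Tcl a := by
  simp [Scl, Tcl]

lemma Tcl_step (a : ℕ) : Tcl (a + 2) = Tcl a + 2*a + 2 := by
  have h1 : Tcl (a+2) = ∑ j ∈ range (a+2), |2*(j:ℤ) - a| := by
    apply Finset.sum_congr rfl
    intro j _
    push_cast
    ring_nf
  rw [h1, Finset.sum_range_succ, Finset.sum_range_succ']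
  have h2 : (∑ j ∈ range a, |2*((j:ℤ)+1) - a|) = Tcl a := by
    apply Finset.sum_congr rfl; intro j _; push_cast; ring_nf
  push_cast
  rw [h2]
  have h3 : |2*((a:ℤ)+1) - a| = a + 2 := by
    rw [abs_of_nonneg] <;> push_cast <;> omega
  have h4 : |(0:ℤ) - a| = a := by
    rw [abs_of_nonpos] <;> push_cast <;> omega
  rw [h3, h4]; ring

lemma Tcl_val (a : ℕ) : Tcl a = (a:ℤ)^2 / 2 + (a:ℤ) % 2 := by
  induction a using Nat.twoStepInduction with
  | zero => simp [Tcl]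
  | one => simp [Tcl]
  | more a ih _ =>
    rw [Tcl_step, ih]
    push_cast
    have : ((a:ℤ)+2)^2 = (a:ℤ)^2 + (4*a+4) := by ring
    rw [this]
    omega

lemma Scl_val (a : ℕ) : ∀ k ≤ a, Scl a k = Tcl a + 2 * min k (a - k) := by
  intro k hk
  induction k with
  | zero => simp [Scl_zero]
  | succ k ih =>
    have hk' : k ≤ a := by omega
    have hdiff : Scl a (k+1) = Scl a k + (|2*(k:ℤ) - a| - |2*(k:ℤ) + 2 - a|) := by
      have h0 : Scl a (k+1) - Scl a k =
          ∑ j ∈ range a, ((if j < k+1 then |2*(j:ℤ) - a| else |2*(j:ℤ) + 2 - a|)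
            - (if j < k then |2*(j:ℤ) - a| else |2*(j:ℤ) + 2 - a|)) := by
        rw [Finset.sum_sub_distrib]; rfl
      have h2 : ∑ j ∈ range a, ((if j < k+1 then |2*(j:ℤ) - a| else |2*(j:ℤ) + 2 - a|)
            - (if j < k then |2*(j:ℤ) - a| else |2*(j:ℤ) + 2 - a|))
          = |2*(k:ℤ) - a| - |2*(k:ℤ) + 2 - a| := by
        rw [Finset.sum_eq_single k]
        · simp
        · intro j _ hj
          rcases Nat.lt_or_ge j k with h | h
          · simp [h, Nat.lt_succ_of_lt h]
          · have hh : ¬ j < k := by omega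
            have h2 : ¬ j < k + 1 := by omega
            simp [hh, h2]
        · intro h
          simp at h
          omega
      rw [h2] at h0
      linarith
    rw [hdiff, ih hk']
    rcases abs_cases (2*(k:ℤ) - a) with ⟨e1, i1⟩ | ⟨e1, i1⟩ <;>
      rcases abs_cases (2*(k:ℤ) + 2 - a) with ⟨e2, i2⟩ | ⟨e2, i2⟩ <;>
      rw [e1, e2] <;>
      · push_cast
        omega

/-! ### Rank machinery -/

section Rank
variable {α L : Type*} [Fintype α] [LinearOrder L] [DecidableEq α]

/-- Rank of `p` under the injection `f`. -/
def rk (f : α → L) (p : α) : ℕ := (univ.filter (fun q => f q < f p)).card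

omit [DecidableEq α] in
lemma rk_lt_card (f : α → L) (p : α) : rk f p < Fintype.card α := by
  have hsub : (univ.filter (fun q => f q < f p)) ⊂ univ := by
    rw [Finset.ssubset_univ_iff]
    intro h
    have : p ∈ univ.filter (fun q => f q < f p) := by rw [h]; exact mem_univ p
    simp at this
  simpa [rk, ← Finset.card_univ] using Finset.card_lt_card hsub

omit [DecidableEq α] in
lemma rk_lt_rk (f : α → L) {p q : α} (h : f p < f q) : rk f p < rk f q := by
  apply Finset.card_lt_card
  constructor
  · intro x hx; simp only [mem_filter, mem_univ, true_and] at hx ⊢; exact hx.trans h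
  · intro hsub
    have : p ∈ univ.filter (fun q' => f q' < f q) := by simp [h]
    have := hsub this
    simp at this

omit [DecidableEq α] in
lemma rk_lt_iff (f : α → L) (hf : Injective f) {p q : α} :
    rk f p < rk f q ↔ f p < f q := by
  constructor
  · intro h
    rcases lt_trichotomy (f p) (f q) with h' | h' | h'
    · exact h'
    · exact absurd (hf h') (by rintro rfl; exact lt_irrefl _ h)
    · exact absurd (rk_lt_rk f h') (by omega)
  · exact rk_lt_rk f

omit [DecidableEq α] in
lemma rk_inj (f : α → L) (hf : Injective f) : Injective (rk f) := by
  intro p q h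
  by_contra hne
  rcases lt_trichotomy (f p) (f q) with h' | h' | h'
  · exact absurd (rk_lt_rk f h') (by omega)
  · exact hne (hf h')
  · exact absurd (rk_lt_rk f h') (by omega)

omit [DecidableEq α] in
lemma rk_bijective (f : α → L) (hf : Injective f) :
    Bijective (fun p => (⟨rk f p, rk_lt_card f p⟩ : Fin (Fintype.card α))) := by
  rw [Fintype.bijective_iff_injective_and_card]
  refine ⟨fun p q h => rk_inj f hf (by simpa using congrArg Fin.val h), by simp⟩

omit [DecidableEq α] in
lemma sum_rk {M : Type*} [AddCommMonoid M] (f : α → L) (hf : Injective f) (F : ℕ → M) :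
    ∑ p : α, F (rk f p) = ∑ j ∈ range (Fintype.card α), F j := by
  rw [← Fin.sum_univ_eq_sum_range F (Fintype.card α)]
  exact Fintype.sum_bijective _ (rk_bijective f hf) _ _ (fun p => rfl)

omit [DecidableEq α] in
lemma rk_threshold (f : α → L) (t0 : L) (ht : ∀ p, f p ≠ t0) (p : α) :
    f p < t0 ↔ rk f p < (univ.filter (fun q => f q < t0)).card := by
  constructor
  · intro h
    apply Finset.card_lt_card
    constructor
    · intro x hx; simp only [mem_filter, mem_univ, true_and] at hx ⊢; exact hx.trans h
    · intro hsub
      have : p ∈ univ.filter (fun q => f q < t0) := by simp [h]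
      have := hsub this
      simp at this
  · intro h
    by_contra h'
    have hgt : t0 < f p := lt_of_le_of_ne (not_lt.mp h') (Ne.symm (ht p))
    have hss : (univ.filter (fun q => f q < t0)) ⊆ (univ.filter (fun q => f q < f p)) := by
      intro x hx; simp only [mem_filter, mem_univ, true_and] at hx ⊢; exact hx.trans hgt
    have := Finset.card_le_card hss
    unfold rk at h
    omega

end Rank

/-! ### Counting lemmas -/

lemma natCard_eq_sum {β : Type*} [Fintype β] (P : β → Prop) [DecidablePred P] :
    Nat.card {x // P x} = ∑ x : β, if P x then 1 else 0 := by
  rw [Nat.card_eq_fintype_card, Fintype.card_subtype, Finset.card_filter]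

lemma fin_count_lt {N : ℕ} (m : Fin N) :
    (∑ j : Fin N, if j < m then 1 else 0) = (m : ℕ) := by
  calc (∑ j : Fin N, if j < m then 1 else 0)
      = ∑ j : Fin N, (fun x : ℕ => if x < (m:ℕ) then (1:ℕ) else 0) (j:ℕ) := by
        apply Finset.sum_congr rfl; intro j _; simp only [Fin.lt_def]
    _ = ∑ j ∈ range N, (fun x : ℕ => if x < (m:ℕ) then (1:ℕ) else 0) j :=
        Fin.sum_univ_eq_sum_range (fun x : ℕ => if x < (m:ℕ) then (1:ℕ) else 0) N
    _ = ((range N).filter (fun x => x < (m:ℕ))).card := (Finset.card_filter _ _).symm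
    _ = (m : ℕ) := by
        have : (range N).filter (fun x => x < (m:ℕ)) = range (m:ℕ) := by
          ext x; simp only [mem_filter, mem_range]; omega
        rw [this, Finset.card_range]

lemma fin_count_gt {N : ℕ} (m : Fin N) :
    (∑ j : Fin N, if m < j then 1 else 0) = N - 1 - (m : ℕ) := by
  calc (∑ j : Fin N, if m < j then 1 else 0)
      = ∑ j : Fin N, (fun x : ℕ => if (m:ℕ) < x then (1:ℕ) else 0) (j:ℕ) := by
        apply Finset.sum_congr rfl; intro j _; simp only [Fin.lt_def]
    _ = ∑ j ∈ range N, (fun x : ℕ => if (m:ℕ) < x then (1:ℕ) else 0) j :=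
        Fin.sum_univ_eq_sum_range (fun x : ℕ => if (m:ℕ) < x then (1:ℕ) else 0) N
    _ = ((range N).filter (fun x => (m:ℕ) < x)).card := (Finset.card_filter _ _).symm
    _ = N - 1 - (m : ℕ) := by
        have : (range N).filter (fun x => (m:ℕ) < x) = Ico ((m:ℕ)+1) N := by
          ext x; simp only [mem_filter, mem_range, Finset.mem_Ico]; omega
        rw [this, Nat.card_Ico]
        omega

/-! ### Graph structure -/

section Graph
variable {r : ℕ} {a : Fin r → ℕ}

lemma adj_none_iff (u : Option (Σ i : Fin r, Fin (a i))) :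
    (apexCliques r a).Adj none u ↔ u ≠ none := by
  constructor
  · intro h; exact h.ne'
  · intro h
    rw [apexCliques, SimpleGraph.fromRel_adj]
    exact ⟨fun he => h he.symm, Or.inl (Or.inl rfl)⟩

lemma adj_some_none (z : Σ i : Fin r, Fin (a i)) :
    (apexCliques r a).Adj (some z) none := ((adj_none_iff (some z)).2 (by simp)).symm

lemma adj_some_iff (i j : Fin r) (p : Fin (a i)) (q : Fin (a j)) :
    (apexCliques r a).Adj (some ⟨i, p⟩) (some ⟨j, q⟩) ↔
      i = j ∧ (⟨i, p⟩ : Σ i : Fin r, Fin (a i)) ≠ ⟨j, q⟩ := by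
  rw [apexCliques, SimpleGraph.fromRel_adj]
  aesop

lemma card_V : Fintype.card (Option (Σ i : Fin r, Fin (a i))) = (∑ i, a i) + 1 := by
  simp

variable (σ : Option (Σ i : Fin r, Fin (a i)) ≃ Fin (Fintype.card (Option (Σ i : Fin r, Fin (a i)))))

lemma predCount_none :
    predCount (apexCliques r a) σ none = ((σ none : ℕ)) := by
  classical
  rw [predCount, natCard_eq_sum]
  have h1 : ∀ u, ((apexCliques r a).Adj none u ∧ σ u < σ none) ↔ σ u < σ none := by
    intro u
    constructor
    · exact And.right
    · intro h
      refine ⟨(adj_none_iff u).2 ?_, h⟩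
      rintro rfl
      exact lt_irrefl _ h
  simp only [h1]
  rw [Fintype.sum_equiv σ _ (fun j => if j < σ none then 1 else 0) (fun u => rfl)]
  exact fin_count_lt (σ none)

lemma succCount_none :
    succCount (apexCliques r a) σ none = (∑ i, a i) - (σ none : ℕ) := by
  classical
  rw [succCount, natCard_eq_sum]
  have h1 : ∀ u, ((apexCliques r a).Adj none u ∧ σ none < σ u) ↔ σ none < σ u := by
    intro u
    constructor
    · exact And.right
    · intro h
      refine ⟨(adj_none_iff u).2 ?_, h⟩
      rintro rfl
      exact lt_irrefl _ h
  simp only [h1]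
  rw [Fintype.sum_equiv σ _ (fun j => if σ none < j then 1 else 0) (fun u => rfl)]
  rw [fin_count_gt (σ none)]
  have h := card_V (r := r) (a := a)
  omega

lemma predCount_some (i : Fin r) (p : Fin (a i)) :
    predCount (apexCliques r a) σ (some ⟨i, p⟩) =
      (if σ none < σ (some ⟨i, p⟩) then 1 else 0)
      + (univ.filter fun q : Fin (a i) =>
          σ (some ⟨i, q⟩) < σ (some ⟨i, p⟩)).card := by
  classical
  rw [predCount, natCard_eq_sum, Fintype.sum_option]
  congr 1
  · simp [adj_some_none]
  · rw [← Finset.univ_sigma_univ, Finset.sum_sigma]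
    rw [Finset.sum_eq_single i]
    · rw [Finset.card_filter]
      apply Finset.sum_congr rfl
      intro q _
      have hiff : ((apexCliques r a).Adj (some ⟨i, p⟩) (some ⟨i, q⟩) ∧
          σ (some ⟨i, q⟩) < σ (some ⟨i, p⟩)) ↔ σ (some ⟨i, q⟩) < σ (some ⟨i, p⟩) := by
        rw [adj_some_iff]
        constructor
        · exact And.right
        · intro h
          refine ⟨⟨rfl, ?_⟩, h⟩
          intro he
          rw [he] at h
          exact lt_irrefl _ h
      simp only [hiff]
    · intro j _ hj
      apply Finset.sum_eq_zero
      intro q _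
      rw [if_neg]
      rintro ⟨hadj, -⟩
      exact hj ((adj_some_iff i j p q).1 hadj).1.symm
    · intro h
      exact absurd (mem_univ i) h

lemma succCount_some (i : Fin r) (p : Fin (a i)) :
    succCount (apexCliques r a) σ (some ⟨i, p⟩) =
      (if σ (some ⟨i, p⟩) < σ none then 1 else 0)
      + (univ.filter fun q : Fin (a i) =>
          σ (some ⟨i, p⟩) < σ (some ⟨i, q⟩)).card := by
  classical
  rw [succCount, natCard_eq_sum, Fintype.sum_option]
  congr 1
  · simp [adj_some_none]
  · rw [← Finset.univ_sigma_univ, Finset.sum_sigma]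
    rw [Finset.sum_eq_single i]
    · rw [Finset.card_filter]
      apply Finset.sum_congr rfl
      intro q _
      have hiff : ((apexCliques r a).Adj (some ⟨i, p⟩) (some ⟨i, q⟩) ∧
          σ (some ⟨i, p⟩) < σ (some ⟨i, q⟩)) ↔ σ (some ⟨i, p⟩) < σ (some ⟨i, q⟩) := by
        rw [adj_some_iff]
        constructor
        · exact And.right
        · intro h
          refine ⟨⟨rfl, ?_⟩, h⟩
          intro he
          rw [he] at h
          exact lt_irrefl _ h
      simp only [hiff]
    · intro j _ hj
      apply Finset.sum_eq_zero
      intro q _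
      rw [if_neg]
      rintro ⟨hadj, -⟩
      exact hj ((adj_some_iff i j p q).1 hadj).1.symm
    · intro h
      exact absurd (mem_univ i) h

lemma clique_sum (i : Fin r) :
    (∑ p : Fin (a i), |(predCount (apexCliques r a) σ (some ⟨i, p⟩) : ℤ)
        - (succCount (apexCliques r a) σ (some ⟨i, p⟩) : ℤ)|)
    = Scl (a i)
        ((univ.filter fun q : Fin (a i) => σ (some ⟨i, q⟩) < σ none).card) := by
  classical
  let f : Fin (a i) → Fin (Fintype.card (Option (Σ i : Fin r, Fin (a i)))) :=
    fun q => σ (some ⟨i, q⟩)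
  have hinj : Injective f := by
    intro q q' h
    have h2 := σ.injective h
    simp only [Option.some.injEq, Sigma.mk.inj_iff, heq_eq_eq, true_and] at h2
    exact h2
  set k := (univ.filter fun q : Fin (a i) => σ (some ⟨i, q⟩) < σ none).card with hkdef
  have hkf : (univ.filter fun q : Fin (a i) => f q < σ none).card = k := rfl
  have hne : ∀ p, f p ≠ σ none := by
    intro p h
    have := σ.injective h
    simp [f] at this
  have hthr : ∀ p, (f p < σ none ↔ rk f p < k) := by
    intro p
    rw [← hkf]
    exact rk_threshold f (σ none) hne p
  have hsum : (∑ p : Fin (a i), |(predCount (apexCliques r a) σ (some ⟨i, p⟩) : ℤ)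
        - (succCount (apexCliques r a) σ (some ⟨i, p⟩) : ℤ)|)
      = ∑ p : Fin (a i), (fun j : ℕ =>
          if j < k then |2*(j:ℤ) - (a i)| else |2*(j:ℤ) + 2 - (a i)|) (rk f p) := by
    apply Finset.sum_congr rfl
    intro p _
    rw [predCount_some, succCount_some]
    have hB : (univ.filter fun q : Fin (a i) =>
        σ (some ⟨i, q⟩) < σ (some ⟨i, p⟩)).card = rk f p := rfl
    set c := (univ.filter fun q : Fin (a i) =>
        σ (some ⟨i, p⟩) < σ (some ⟨i, q⟩)).card with hcdef
    have hbc : rk f p + c + 1 = a i := by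
      have hsplit : (univ.filter fun q : Fin (a i) => σ (some ⟨i, q⟩) < σ (some ⟨i, p⟩))
          ∪ (univ.filter fun q : Fin (a i) => σ (some ⟨i, p⟩) < σ (some ⟨i, q⟩))
          = univ.erase p := by
        ext q
        simp only [mem_union, mem_filter, mem_univ, true_and, mem_erase, and_true]
        constructor
        · rintro (h | h) <;> · rintro rfl; exact lt_irrefl _ h
        · intro hqp
          have hne2 : f q ≠ f p := fun he => hqp (hinj he)
          rcases lt_or_gt_of_ne hne2 with h | h
          · exact Or.inl h
          · exact Or.inr h
      have hdisj : Disjoint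
          (univ.filter fun q : Fin (a i) => σ (some ⟨i, q⟩) < σ (some ⟨i, p⟩))
          (univ.filter fun q : Fin (a i) => σ (some ⟨i, p⟩) < σ (some ⟨i, q⟩)) := by
        rw [Finset.disjoint_left]
        intro q h1 h2
        simp only [mem_filter, mem_univ, true_and] at h1 h2
        exact lt_asymm h1 h2
      have hcard := congrArg Finset.card hsplit
      rw [Finset.card_union_of_disjoint hdisj, Finset.card_erase_of_mem (mem_univ p),
        Finset.card_univ, Fintype.card_fin, hB] at hcard
      have hpos : 0 < a i := p.pos
      omega
    rw [hB]
    by_cases hlt : f p < σ none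
    · have h1 : rk f p < k := (hthr p).1 hlt
      have h2 : ¬ σ (some ⟨i, p⟩) < σ none → False := fun h => h hlt
      simp only [if_pos h1]
      rw [if_neg (asymm hlt), if_pos hlt]
      congr 1
      push_cast
      omega
    · have h1 : ¬ rk f p < k := fun h => hlt ((hthr p).2 h)
      have hgt : σ none < f p := lt_of_le_of_ne (not_lt.mp hlt) (Ne.symm (hne p))
      simp only [if_neg h1]
      rw [if_pos hgt, if_neg hlt]
      congr 1
      push_cast
      omega
  rw [hsum, sum_rk f hinj (fun j : ℕ =>
      if j < k then |2*(j:ℤ) - (a i)| else |2*(j:ℤ) + 2 - (a i)|), Fintype.card_fin]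
  rfl

lemma t_eq_sum_k :
    ((σ none : ℕ)) = ∑ i : Fin r,
      (univ.filter fun q : Fin (a i) => σ (some ⟨i, q⟩) < σ none).card := by
  classical
  have h1 : ((σ none : ℕ)) = ∑ u : Option (Σ i : Fin r, Fin (a i)),
      if σ u < σ none then 1 else 0 := by
    rw [Fintype.sum_equiv σ _ (fun j => if j < σ none then 1 else 0) (fun u => rfl)]
    exact (fin_count_lt (σ none)).symm
  rw [h1, Fintype.sum_option]
  simp only [lt_irrefl, if_false]
  rw [zero_add, ← Finset.univ_sigma_univ, Finset.sum_sigma]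
  apply Finset.sum_congr rfl
  intro i _
  exact (Finset.card_filter _ _).symm

lemma imbalance_formula :
    imbalance (apexCliques r a) σ
      = |2 * ((σ none : ℕ) : ℤ) - ((∑ i, a i : ℕ) : ℤ)|
        + ∑ i : Fin r, Scl (a i)
            ((univ.filter fun q : Fin (a i) => σ (some ⟨i, q⟩) < σ none).card) := by
  classical
  rw [imbalance, Fintype.sum_option]
  congr 1
  · rw [predCount_none, succCount_none]
    have ht : (σ none : ℕ) ≤ ∑ i, a i := by
      have h := (σ none).isLt
      have h2 := card_V (r := r) (a := a)
      omega
    rw [Nat.cast_sub ht]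
    congr 1
    ring
  · rw [← Finset.univ_sigma_univ, Finset.sum_sigma]
    apply Finset.sum_congr rfl
    intro i _
    exact clique_sum σ i

end Graph

end Stmt11Aux

open Finset Function Stmt11Aux in
theorem stmt_11 (r : ℕ) (a : Fin r → ℕ) (hpos : ∀ i, 0 < a i) :
    IsLeast
      (Set.range fun σ : Option (Σ i : Fin r, Fin (a i)) ≃
          Fin (Fintype.card (Option (Σ i : Fin r, Fin (a i)))) =>
        imbalance (apexCliques r a) σ)
      ((∑ i : Fin r, ((a i : ℤ) ^ 2 / 2 + (a i : ℤ) % 2)) +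
        ((Finset.univ : Finset (Fin r)).powerset.image fun A =>
            |∑ i ∈ A, (a i : ℤ) - ∑ i ∈ Aᶜ, (a i : ℤ)|).min' (by simp)) := by
  classical
  set n := ∑ i, a i with hn
  have hTcl : (∑ i : Fin r, ((a i : ℤ) ^ 2 / 2 + (a i : ℤ) % 2)) = ∑ i, Tcl (a i) := by
    apply Finset.sum_congr rfl
    intro i _
    rw [Tcl_val]
  have habs : ∀ A : Finset (Fin r),
      |∑ i ∈ A, (a i : ℤ) - ∑ i ∈ Aᶜ, (a i : ℤ)|
        = |2 * ((∑ i ∈ A, a i : ℕ) : ℤ) - (n : ℤ)| := by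
    intro A
    have hc : ∑ i ∈ A, (a i : ℤ) + ∑ i ∈ Aᶜ, (a i : ℤ) = (n : ℤ) := by
      rw [Finset.sum_add_sum_compl, hn]
      push_cast
      rfl
    have : ∑ i ∈ A, (a i : ℤ) - ∑ i ∈ Aᶜ, (a i : ℤ)
        = 2 * ((∑ i ∈ A, a i : ℕ) : ℤ) - (n : ℤ) := by
      push_cast at hc ⊢
      linarith
    rw [this]
  constructor
  · -- membership : there is an ordering attaining the bound
    have hmem := Finset.min'_mem
      (((Finset.univ : Finset (Fin r)).powerset.image fun A =>
        |∑ i ∈ A, (a i : ℤ) - ∑ i ∈ Aᶜ, (a i : ℤ)|)) (by simp)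
    rw [Finset.mem_image] at hmem
    obtain ⟨A0, -, hval⟩ := hmem
    -- build the ordering
    set K := (r + 1) * (n + 1) with hK
    have hai : ∀ i, a i ≤ n := by
      intro i
      exact Finset.single_le_sum (f := a) (fun j _ => Nat.zero_le _) (mem_univ i)
    let φ : Option (Σ i : Fin r, Fin (a i)) → ℕ := fun v =>
      match v with
      | none => K
      | some ⟨i, p⟩ => (if i ∈ A0 then 0 else 2) * K + ((i : ℕ) * (n + 1) + (p : ℕ))
    have hinner : ∀ (i : Fin r) (p : Fin (a i)), (i : ℕ) * (n + 1) + (p : ℕ) < K := by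
      intro i p
      rw [hK]
      have h2 : (p : ℕ) < a i := p.isLt
      have h3 : (i : ℕ) < r := i.isLt
      have h4 := hai i
      calc (i : ℕ) * (n + 1) + (p : ℕ) < (i : ℕ) * (n + 1) + (n + 1) := by omega
        _ = ((i : ℕ) + 1) * (n + 1) := by ring
        _ ≤ (r + 1) * (n + 1) := Nat.mul_le_mul_right _ (by omega)
    have hφinj : Injective φ := by
      rintro (_ | ⟨i, p⟩) (_ | ⟨j, q⟩) h
      · rfl
      · exfalso
        have := hinner j q
        simp only [φ] at h
        split_ifs at h <;> omega
      · exfalso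
        have := hinner i p
        simp only [φ] at h
        split_ifs at h <;> omega
      · simp only [φ] at h
        have hi := hinner i p
        have hj := hinner j q
        have hij : (i : ℕ) * (n + 1) + (p : ℕ) = (j : ℕ) * (n + 1) + (q : ℕ) := by
          split_ifs at h <;> omega
        have hpn : (p : ℕ) < n + 1 := by have := p.isLt; have := hai i; omega
        have hqn : (q : ℕ) < n + 1 := by have := q.isLt; have := hai j; omega
        have hij' : (i : ℕ) = (j : ℕ) := by
          rcases Nat.lt_trichotomy (i : ℕ) (j : ℕ) with hl | he | hl
          · exfalso; nlinarith
          · exact he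
          · exfalso; nlinarith
        have : i = j := Fin.ext hij'
        subst this
        have : p = q := Fin.ext (by omega)
        subst this
        rfl
    let σ0 : Option (Σ i : Fin r, Fin (a i)) ≃
        Fin (Fintype.card (Option (Σ i : Fin r, Fin (a i)))) :=
      Equiv.ofBijective _ (rk_bijective φ hφinj)
    have hσ0 : ∀ u v, (σ0 u < σ0 v ↔ φ u < φ v) := by
      intro u v
      change (⟨rk φ u, _⟩ : Fin _) < ⟨rk φ v, _⟩ ↔ _
      rw [Fin.lt_def]
      exact rk_lt_iff φ hφinj
    have hφlt : ∀ (i : Fin r) (p : Fin (a i)),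
        (φ (some ⟨i, p⟩) < φ none ↔ i ∈ A0) := by
      intro i p
      have := hinner i p
      simp only [φ]
      split_ifs with h
      · simp only [zero_mul, zero_add]
        exact iff_of_true this h
      · exact iff_of_false (by omega) h
    have hk : ∀ i : Fin r,
        (univ.filter fun q : Fin (a i) => σ0 (some ⟨i, q⟩) < σ0 none).card
          = if i ∈ A0 then a i else 0 := by
      intro i
      split_ifs with h
      · rw [Finset.filter_true_of_mem, Finset.card_univ, Fintype.card_fin]
        intro q _
        rw [hσ0]
        exact (hφlt i q).2 h
      · rw [Finset.filter_false_of_mem, Finset.card_empty]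
        intro q _
        rw [hσ0]
        intro hh
        exact h ((hφlt i q).1 hh)
    refine ⟨σ0, ?_⟩
    show imbalance (apexCliques r a) σ0 = _
    rw [imbalance_formula σ0]
    have ht : ((σ0 none : ℕ)) = ∑ i ∈ A0, a i := by
      rw [t_eq_sum_k σ0]
      rw [Finset.sum_congr rfl (fun i _ => hk i)]
      rw [Finset.sum_ite_mem, Finset.univ_inter]
    have hScl : ∀ i : Fin r,
        Scl (a i) ((univ.filter fun q : Fin (a i) => σ0 (some ⟨i, q⟩) < σ0 none).card)
          = Tcl (a i) := by
      intro i
      rw [hk i]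
      split_ifs with h
      · rw [Scl_val (a i) (a i) le_rfl]
        simp
      · rw [Scl_val (a i) 0 (Nat.zero_le _)]
        simp
    rw [Finset.sum_congr rfl (fun i _ => hScl i), ht, hTcl]
    rw [← habs A0, hval]
    ring
  · -- lower bound
    rintro x ⟨σ, rfl⟩
    show _ ≤ imbalance (apexCliques r a) σ
    rw [imbalance_formula σ]
    set k : Fin r → ℕ := fun i =>
      (univ.filter fun q : Fin (a i) => σ (some ⟨i, q⟩) < σ none).card with hkdef
    have hkle : ∀ i, k i ≤ a i := by
      intro i
      calc k i ≤ (univ : Finset (Fin (a i))).card := Finset.card_filter_le _ _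
        _ = a i := by rw [Finset.card_univ, Fintype.card_fin]
    have hScl : ∀ i : Fin r, Scl (a i) (k i) = Tcl (a i) + 2 * min (k i) (a i - k i) := by
      intro i
      exact Scl_val (a i) (k i) (hkle i)
    set A : Finset (Fin r) := univ.filter (fun i => a i < 2 * k i) with hA
    have ht : ((σ none : ℕ)) = ∑ i, k i := t_eq_sum_k σ
    have hdist : |((∑ i ∈ A, a i : ℕ) : ℤ) - ((σ none : ℕ) : ℤ)|
        ≤ ∑ i : Fin r, ((min (k i) (a i - k i) : ℕ) : ℤ) := by
      have hs : ((∑ i ∈ A, a i : ℕ) : ℤ) - ((σ none : ℕ) : ℤ)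
          = ∑ i : Fin r, ((if i ∈ A then (a i : ℤ) else 0) - (k i : ℤ)) := by
        rw [Finset.sum_sub_distrib]
        congr 1
        · rw [Finset.sum_ite_mem, Finset.univ_inter]
          push_cast
          rfl
        · rw [ht]
          push_cast
          rfl
      rw [hs]
      refine (Finset.abs_sum_le_sum_abs _ _).trans ?_
      apply Finset.sum_le_sum
      intro i _
      have hki := hkle i
      by_cases h : i ∈ A
      · have h2 : a i < 2 * k i := by
          rw [hA, Finset.mem_filter] at h
          exact h.2
        rw [if_pos h]
        rcases abs_cases ((a i : ℤ) - (k i : ℤ)) with ⟨e, _⟩ | ⟨e, _⟩ <;> rw [e] <;>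
          · push_cast
            omega
      · have h2 : ¬ a i < 2 * k i := by
          intro hh
          exact h (by rw [hA, Finset.mem_filter]; exact ⟨mem_univ i, hh⟩)
        rw [if_neg h]
        rcases abs_cases ((0 : ℤ) - (k i : ℤ)) with ⟨e, _⟩ | ⟨e, _⟩ <;> rw [e] <;>
          · push_cast
            omega
    have htri : |2 * ((∑ i ∈ A, a i : ℕ) : ℤ) - (n : ℤ)|
        ≤ |2 * ((σ none : ℕ) : ℤ) - (n : ℤ)|
          + 2 * ∑ i : Fin r, ((min (k i) (a i - k i) : ℕ) : ℤ) := by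
      have h1 : 2 * ((∑ i ∈ A, a i : ℕ) : ℤ) - (n : ℤ)
          = (2 * ((σ none : ℕ) : ℤ) - (n : ℤ))
            + 2 * (((∑ i ∈ A, a i : ℕ) : ℤ) - ((σ none : ℕ) : ℤ)) := by ring
      rw [h1]
      refine (abs_add_le _ _).trans ?_
      have h2 : |2 * (((∑ i ∈ A, a i : ℕ) : ℤ) - ((σ none : ℕ) : ℤ))|
          = 2 * |(((∑ i ∈ A, a i : ℕ) : ℤ) - ((σ none : ℕ) : ℤ))| := by
        rw [abs_mul]
        simp
      rw [h2]
      linarith [hdist]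
    have hminle : ((Finset.univ : Finset (Fin r)).powerset.image fun B =>
        |∑ i ∈ B, (a i : ℤ) - ∑ i ∈ Bᶜ, (a i : ℤ)|).min'
          (by simp) ≤ |2 * ((∑ i ∈ A, a i : ℕ) : ℤ) - (n : ℤ)| := by
      rw [← habs A]
      apply Finset.min'_le
      rw [Finset.mem_image]
      exact ⟨A, Finset.mem_powerset.2 (Finset.subset_univ A), rfl⟩
    have hgoal : (∑ i : Fin r, Scl (a i)
        ((univ.filter fun q : Fin (a i) => σ (some ⟨i, q⟩) < σ none).card))
        = ∑ i : Fin r, Scl (a i) (k i) := rfl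
    have hsplit : (∑ i : Fin r, Scl (a i) (k i))
        = (∑ i : Fin r, Tcl (a i))
          + 2 * ∑ i : Fin r, ((min (k i) (a i - k i) : ℕ) : ℤ) := by
      rw [Finset.sum_congr rfl (fun i _ => hScl i), Finset.sum_add_distrib, ← Finset.mul_sum]
    rw [hgoal, hsplit, hTcl]
    linarith [htri, hminle]
end

section
/- Let G be a graph with twin cover S such that the components of G∖S are cliques C_1,...,C_r of sizes ℓ_1,...,ℓ_r. Then the minimum imbalance of G satisfies I(G) ≥ ∑_{i=1}^r γ(ℓ_i), where γ(ℓ) = ⌊ℓ²/2⌋. -/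
/-- The arithmetic sum `∑_{k<n} |n-1-2k|`, which equals `⌊n²/2⌋`. -/
def Fsum (n : ℕ) : ℤ := ∑ k ∈ Finset.range n, |(n : ℤ) - 1 - 2 * k|

lemma Fsum_step (n : ℕ) : Fsum (n + 2) = Fsum n + 2 * (n + 1) := by
  unfold Fsum
  rw [Finset.sum_range_succ']
  have e1 : ∀ k ∈ Finset.range (n+1),
      |((n+2 : ℕ) : ℤ) - 1 - 2 * ((k : ℕ)+1 : ℕ)| = |(n:ℤ)-1-2*k| := by
    intro k _; push_cast; ring_nf
  rw [Finset.sum_congr rfl e1, Finset.sum_range_succ]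
  have h1 : |(n:ℤ) - 1 - 2*n| = n + 1 := by
    rw [abs_of_nonpos (by omega)]; push_cast; ring
  have h2 : |((n+2:ℕ):ℤ) - 1 - 2 * (0:ℕ)| = n + 1 := by
    rw [abs_of_nonneg (by omega)]; push_cast; ring
  rw [h1, h2]
  ring

lemma Fsum_bound (n : ℕ) : (n : ℤ)^2 - 1 ≤ 2 * Fsum n := by
  induction n using Nat.strong_induction_on with
  | _ n ih =>
    match n with
    | 0 => simp [Fsum]
    | 1 => simp [Fsum]
    | (n+2) =>
      have h := ih n (by omega)
      rw [Fsum_step]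
      push_cast
      nlinarith [h]

lemma predCount_eq {V : Type*} [Fintype V] (G : SimpleGraph V)
    (σ : V ≃ Fin (Fintype.card V)) (v : V) :
    predCount G σ v = Set.ncard {u : V | G.Adj v u ∧ σ u < σ v} := by
  rw [predCount, ← Nat.card_coe_set_eq]
  rfl

lemma succCount_eq {V : Type*} [Fintype V] (G : SimpleGraph V)
    (σ : V ≃ Fin (Fintype.card V)) (v : V) :
    succCount G σ v = Set.ncard {u : V | G.Adj v u ∧ σ v < σ u} := by
  rw [succCount, ← Nat.card_coe_set_eq]
  rfl

/-- For true twins `u, w` with `σ u < σ w`, the (pred − succ) value grows by at least 2. -/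
lemma twin_step {V : Type*} [Fintype V] (G : SimpleGraph V)
    (σ : V ≃ Fin (Fintype.card V)) (u w : V) (hadj : G.Adj u w)
    (twin : ∀ x : V, (G.Adj u x ∨ x = u) ↔ (G.Adj w x ∨ x = w))
    (hlt : σ u < σ w) :
    (predCount G σ u : ℤ) - succCount G σ u + 2 ≤
      (predCount G σ w : ℤ) - succCount G σ w := by
  have h1 : predCount G σ u + 1 ≤ predCount G σ w := by
    rw [predCount_eq, predCount_eq]
    have hnm : u ∉ {x : V | G.Adj u x ∧ σ x < σ u} := by
      simp [SimpleGraph.irrefl]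
    have hsub : insert u {x : V | G.Adj u x ∧ σ x < σ u} ⊆
        {x : V | G.Adj w x ∧ σ x < σ w} := by
      intro x hx
      rcases hx with rfl | hx
      · exact ⟨(G.adj_symm hadj), hlt⟩
      · obtain ⟨hax, hxu⟩ := hx
        rcases (twin x).mp (Or.inl hax) with haw | rfl
        · exact ⟨haw, lt_trans hxu hlt⟩
        · exact absurd (lt_trans hxu hlt) (lt_irrefl _)
    calc Set.ncard {x : V | G.Adj u x ∧ σ x < σ u} + 1
        = Set.ncard (insert u {x : V | G.Adj u x ∧ σ x < σ u}) := by
          rw [Set.ncard_insert_of_notMem hnm (Set.toFinite _)]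
      _ ≤ Set.ncard {x : V | G.Adj w x ∧ σ x < σ w} :=
          Set.ncard_le_ncard hsub (Set.toFinite _)
  have h2 : succCount G σ w + 1 ≤ succCount G σ u := by
    rw [succCount_eq, succCount_eq]
    have hnm : w ∉ {x : V | G.Adj w x ∧ σ w < σ x} := by
      simp [SimpleGraph.irrefl]
    have hsub : insert w {x : V | G.Adj w x ∧ σ w < σ x} ⊆
        {x : V | G.Adj u x ∧ σ u < σ x} := by
      intro x hx
      rcases hx with rfl | hx
      · exact ⟨hadj, hlt⟩
      · obtain ⟨hax, hwx⟩ := hx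
        rcases (twin x).mpr (Or.inl hax) with hau | rfl
        · exact ⟨hau, lt_trans hlt hwx⟩
        · exact absurd (lt_trans hlt hwx) (lt_irrefl _)
    calc Set.ncard {x : V | G.Adj w x ∧ σ w < σ x} + 1
        = Set.ncard (insert w {x : V | G.Adj w x ∧ σ w < σ x}) := by
          rw [Set.ncard_insert_of_notMem hnm (Set.toFinite _)]
      _ ≤ Set.ncard {x : V | G.Adj u x ∧ σ u < σ x} :=
          Set.ncard_le_ncard hsub (Set.toFinite _)
  omega

/-- If a function on a linearly ordered finite set increases by at least 2 between
consecutive elements, the sum of its absolute values is at least `⌊card²/2⌋`. -/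
lemma sum_abs_ge {α : Type*} [LinearOrder α] [DecidableEq α] (T : Finset α) (g : α → ℤ)
    (key : ∀ u ∈ T, ∀ w ∈ T, u < w → g u + 2 ≤ g w) :
    (T.card : ℤ)^2 / 2 ≤ ∑ v ∈ T, |g v| := by
  set n := T.card with hn
  let e : Fin n ≃o {x // x ∈ T} := T.orderIsoOfFin hn.symm
  set a : Fin n → ℤ := fun k => g (e k : α) with ha
  have chain : ∀ (d : ℕ) (k j : Fin n), (j : ℕ) = (k : ℕ) + d → a k + 2 * d ≤ a j := by
    intro d
    induction d with
    | zero =>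
      intro k j h
      have : k = j := Fin.ext (by omega)
      subst this; simp
    | succ d ih =>
      intro k j h
      have hkd : (k : ℕ) + d < n := by omega
      have h1 := ih k ⟨(k : ℕ) + d, hkd⟩ rfl
      have hlt : (⟨(k : ℕ) + d, hkd⟩ : Fin n) < j := by
        simp only [Fin.lt_def]; omega
      have h2 : a ⟨(k : ℕ) + d, hkd⟩ + 2 ≤ a j := by
        apply key _ (e ⟨(k : ℕ) + d, hkd⟩).2 _ (e j).2
        exact Subtype.coe_lt_coe.mpr (e.strictMono hlt)
      push_cast
      push_cast at h1
      omega
  have pair : ∀ k : Fin n, 2 * |(n : ℤ) - 1 - 2 * (k : ℕ)| ≤ |a k| + |a k.rev| := by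
    intro k
    have hkn : (k : ℕ) < n := k.isLt
    have hrev : (k.rev : ℕ) = n - 1 - (k : ℕ) := by
      simp [Fin.rev]; omega
    rcases le_total ((k : ℕ)) ((k.rev : ℕ)) with h | h
    · have hc := chain ((k.rev : ℕ) - (k : ℕ)) k k.rev (by omega)
      have e1 : (((k.rev : ℕ) - (k : ℕ) : ℕ) : ℤ) = ((k.rev : ℕ) : ℤ) - ((k : ℕ) : ℤ) := by
        omega
      have e2 : |(n : ℤ) - 1 - 2 * (k : ℕ)| = ((k.rev : ℕ) : ℤ) - ((k : ℕ) : ℤ) := by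
        rw [abs_of_nonneg (by omega)]; omega
      rw [e1] at hc
      have := neg_abs_le (a k)
      have := le_abs_self (a k.rev)
      linarith
    · have hc := chain ((k : ℕ) - (k.rev : ℕ)) k.rev k (by omega)
      have e1 : (((k : ℕ) - (k.rev : ℕ) : ℕ) : ℤ) = ((k : ℕ) : ℤ) - ((k.rev : ℕ) : ℤ) := by
        omega
      have e2 : |(n : ℤ) - 1 - 2 * (k : ℕ)| = ((k : ℕ) : ℤ) - ((k.rev : ℕ) : ℤ) := by
        rw [abs_of_nonpos (by omega)]; omega
      rw [e1] at hc
      have := neg_abs_le (a k.rev)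
      have := le_abs_self (a k)
      linarith
  have hsum : ∑ v ∈ T, |g v| = ∑ k : Fin n, |a k| := by
    rw [← Finset.sum_attach T (fun x => |g x|), ← Finset.univ_eq_attach,
      ← Equiv.sum_comp e.toEquiv (fun v => |g (v : α)|)]
    rfl
  have hrevsum : ∑ k : Fin n, |a k.rev| = ∑ k : Fin n, |a k| :=
    Fintype.sum_bijective Fin.rev Fin.rev_bijective _ _ (fun k => rfl)
  have hFsum : ∑ k : Fin n, |(n : ℤ) - 1 - 2 * (k : ℕ)| = Fsum n := by
    rw [Fsum, ← Fin.sum_univ_eq_sum_range]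
  have hbig : 2 * Fsum n ≤ 2 * ∑ k : Fin n, |a k| := by
    calc 2 * Fsum n = ∑ k : Fin n, 2 * |(n : ℤ) - 1 - 2 * (k : ℕ)| := by
          rw [← hFsum, Finset.mul_sum]
      _ ≤ ∑ k : Fin n, (|a k| + |a k.rev|) := Finset.sum_le_sum (fun k _ => pair k)
      _ = 2 * ∑ k : Fin n, |a k| := by
          rw [Finset.sum_add_distrib, hrevsum]; ring
  have hb := Fsum_bound n
  rw [hsum]
  set S := ∑ k : Fin n, |a k|
  set m := (n : ℤ)^2
  omega

theorem stmt_12 {V : Type*} [Fintype V] [DecidableEq V] (G : SimpleGraph V)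
    (S : Finset V) (r : ℕ) (C : Fin r → Finset V)
    -- the cliques are pairwise disjoint
    (hdisj : ∀ i j : Fin r, i ≠ j → Disjoint (C i) (C j))
    -- the cliques avoid the twin cover and cover its complement:
    (havoid : ∀ i : Fin r, ∀ v ∈ C i, v ∉ S)
    (hcover : ∀ v : V, v ∉ S → ∃ i : Fin r, v ∈ C i)
    -- the vertices of each clique are true twins in G
    (htwins : ∀ i : Fin r, ∀ u ∈ C i, ∀ w ∈ C i, ∀ x : V,
      (G.Adj u x ∨ x = u) ↔ (G.Adj w x ∨ x = w))
    -- each clique is indeed a clique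
    (hclique : ∀ i : Fin r, ∀ u ∈ C i, ∀ w ∈ C i, u ≠ w → G.Adj u w)
    -- no edges between distinct cliques (they are distinct components of G \ S)
    (hcross : ∀ i j : Fin r, i ≠ j → ∀ u ∈ C i, ∀ w ∈ C j, ¬ G.Adj u w) :
    ∀ σ : V ≃ Fin (Fintype.card V),
      imbalance G σ ≥ ∑ i : Fin r, ((C i).card : ℤ) ^ 2 / 2 := by
  intro σ
  set g : V → ℤ := fun v => (predCount G σ v : ℤ) - succCount G σ v with hg
  have step3 : ∀ i : Fin r, ((C i).card : ℤ)^2 / 2 ≤ ∑ v ∈ C i, |g v| := by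
    intro i
    have hcard : (C i).card = ((C i).image σ).card :=
      (Finset.card_image_of_injective _ σ.injective).symm
    have hsum : ∑ x ∈ (C i).image σ, |g (σ.symm x)| = ∑ v ∈ C i, |g v| := by
      rw [Finset.sum_image (fun x _ y _ h => σ.injective h)]
      simp
    rw [hcard, ← hsum]
    apply sum_abs_ge
    intro x hx y hy hxy
    obtain ⟨u, hu, rfl⟩ := Finset.mem_image.mp hx
    obtain ⟨w, hw, rfl⟩ := Finset.mem_image.mp hy
    simp only [Equiv.symm_apply_apply]
    have hne : u ≠ w := fun h => by subst h; exact lt_irrefl _ hxy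
    exact twin_step G σ u w (hclique i u hu w hw hne) (htwins i u hu w hw) hxy
  have hpd : (↑(Finset.univ : Finset (Fin r)) : Set (Fin r)).PairwiseDisjoint C :=
    fun i _ j _ hij => hdisj i j hij
  calc ∑ i : Fin r, ((C i).card : ℤ)^2 / 2
      ≤ ∑ i : Fin r, ∑ v ∈ C i, |g v| := Finset.sum_le_sum (fun i _ => step3 i)
    _ = ∑ v ∈ Finset.univ.biUnion C, |g v| := (Finset.sum_biUnion hpd).symm
    _ ≤ ∑ v : V, |g v| :=
        Finset.sum_le_sum_of_subset_of_nonneg (Finset.subset_univ _)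
          (fun v _ _ => abs_nonneg _)
    _ = imbalance G σ := rfl
end

section
/- Let G be a connected graph with a twin cover {v} of size one, whose components outside the cover are cliques of sizes ℓ_1,...,ℓ_r. Then I(G) ≥ ∑_{i=1}^r (γ(ℓ_i) + (ℓ_i mod 2)). -/
lemma Tsum (ℓ : ℕ) : ∑ j ∈ Finset.range (ℓ+1), |2*(j:ℤ) - (ℓ:ℤ)|
    = (ℓ:ℤ)^2/2 + (ℓ:ℤ)%2 + (ℓ:ℤ) := by
  induction ℓ using Nat.strong_induction_on with
  | _ ℓ ih =>
    match ℓ with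
    | 0 => norm_num
    | 1 => norm_num [Finset.sum_range_succ]
    | (n+2) =>
      have key : ∑ j ∈ Finset.range (n+2+1), |2*(j:ℤ) - ((n+2:ℕ):ℤ)|
          = (∑ j ∈ Finset.range (n+1), |2*(j:ℤ) - (n:ℤ)|) + (2*(n:ℤ)+4) := by
        rw [Finset.sum_range_succ, Finset.sum_range_succ']
        have h2 : (∑ j ∈ Finset.range (n+1), |2*(((j+1 : ℕ)):ℤ) - ((n+2:ℕ):ℤ)|)
            = ∑ j ∈ Finset.range (n+1), |2*(j:ℤ) - (n:ℤ)| := by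
          apply Finset.sum_congr rfl
          intro j hj
          push_cast
          have : 2*((j:ℤ)+1) - ((n:ℤ)+2) = 2*(j:ℤ) - (n:ℤ) := by ring
          rw [this]
        rw [h2]
        have e0 : |2*((0:ℕ):ℤ) - ((n+2:ℕ):ℤ)| = (n:ℤ)+2 := by
          push_cast; rw [abs_of_nonpos (by omega)]; ring
        have e1 : |2*(((n+2:ℕ)):ℤ) - ((n+2:ℕ):ℤ)| = (n:ℤ)+2 := by
          rw [abs_of_nonneg (by push_cast; omega)]; push_cast; ring
        rw [e0, e1]; ring
      rw [key, ih n (by omega)]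
      have h2 : ((n:ℤ)+2)^2 = (n:ℤ)^2 + 4*(n:ℤ) + 4 := by ring
      push_cast
      omega

lemma keyIneq {α : Type*} [DecidableEq α] (S : Finset α) (f : α → ℕ)
    (hinj : Set.InjOn f S) (hle : ∀ u ∈ S, f u ≤ S.card) :
    (S.card:ℤ)^2/2 + (S.card:ℤ)%2 ≤ ∑ u ∈ S, |2*(f u : ℤ) - (S.card:ℤ)| := by
  set ℓ := S.card with hℓ
  have himg : S.image f ⊆ Finset.range (ℓ+1) := by
    intro j hj
    rw [Finset.mem_image] at hj
    obtain ⟨u, hu, rfl⟩ := hj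
    exact Finset.mem_range.2 (Nat.lt_succ_of_le (hle u hu))
  have hcard : (S.image f).card = ℓ := Finset.card_image_of_injOn hinj
  have hsum1 : ∑ u ∈ S, |2*(f u:ℤ) - (ℓ:ℤ)| = ∑ j ∈ S.image f, |2*(j:ℤ) - (ℓ:ℤ)| :=
    (Finset.sum_image (f := fun j => |2*((j:ℕ):ℤ) - (ℓ:ℤ)|) (g := f)
      (fun x hx y hy h => hinj hx hy h)).symm
  have hsplit : ∑ j ∈ Finset.range (ℓ+1) \ S.image f, |2*(j:ℤ) - (ℓ:ℤ)|
      + ∑ j ∈ S.image f, |2*(j:ℤ) - (ℓ:ℤ)|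
      = ∑ j ∈ Finset.range (ℓ+1), |2*(j:ℤ) - (ℓ:ℤ)| := Finset.sum_sdiff himg
  have hbound : ∑ j ∈ Finset.range (ℓ+1) \ S.image f, |2*(j:ℤ) - (ℓ:ℤ)| ≤ (ℓ:ℤ) := by
    have hcards : (Finset.range (ℓ+1) \ S.image f).card = 1 := by
      rw [Finset.card_sdiff_of_subset himg, Finset.card_range, hcard]; omega
    calc ∑ j ∈ Finset.range (ℓ+1) \ S.image f, |2*(j:ℤ) - (ℓ:ℤ)|
        ≤ (Finset.range (ℓ+1) \ S.image f).card • (ℓ:ℤ) := by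
          apply Finset.sum_le_card_nsmul
          intro j hj
          have : j ∈ Finset.range (ℓ+1) := (Finset.mem_sdiff.1 hj).1
          have hjl : j ≤ ℓ := Nat.lt_succ_iff.mp (Finset.mem_range.1 this)
          rw [abs_le]
          constructor <;> push_cast <;> omega
      _ = (ℓ:ℤ) := by rw [hcards, one_smul]
  rw [hsum1]
  linarith [hsplit, hbound, Tsum ℓ]

theorem stmt_13 {V : Type*} [Fintype V] [DecidableEq V] (G : SimpleGraph V)
    (hconn : G.Connected) (v : V) (r : ℕ) (C : Fin r → Finset V)
    -- the cliques are pairwise disjoint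
    (hdisj : ∀ i j : Fin r, i ≠ j → Disjoint (C i) (C j))
    -- the cliques partition V \ {v}:
    (havoid : ∀ i : Fin r, v ∉ C i)
    (hcover : ∀ u : V, u ≠ v → ∃ i : Fin r, u ∈ C i)
    -- the vertices of each clique are true twins in G
    (htwins : ∀ i : Fin r, ∀ u ∈ C i, ∀ w ∈ C i, ∀ x : V,
      (G.Adj u x ∨ x = u) ↔ (G.Adj w x ∨ x = w))
    -- each clique is indeed a clique
    (hclique : ∀ i : Fin r, ∀ u ∈ C i, ∀ w ∈ C i, u ≠ w → G.Adj u w)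
    -- every vertex outside the cover is adjacent to the cover vertex v
    (hadj : ∀ i : Fin r, ∀ u ∈ C i, G.Adj v u)
    -- no edges between distinct cliques (they are distinct components of G - v)
    (hcross : ∀ i j : Fin r, i ≠ j → ∀ u ∈ C i, ∀ w ∈ C j, ¬ G.Adj u w) :
    ∀ σ : V ≃ Fin (Fintype.card V),
      imbalance G σ ≥ ∑ i : Fin r, (((C i).card : ℤ) ^ 2 / 2 + ((C i).card : ℤ) % 2) := by
  classical
  intro σ
  have hpcard : ∀ u : V, predCount G σ u
      = (Finset.univ.filter (fun w => G.Adj u w ∧ σ w < σ u)).card := by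
    intro u
    rw [predCount, Nat.card_eq_fintype_card, Fintype.card_subtype]
  have hscard : ∀ u : V, succCount G σ u
      = (Finset.univ.filter (fun w => G.Adj u w ∧ σ u < σ w)).card := by
    intro u
    rw [succCount, Nat.card_eq_fintype_card, Fintype.card_subtype]
  -- neighborhood characterization
  have hnbr : ∀ i : Fin r, ∀ u ∈ C i, ∀ x : V,
      G.Adj u x ↔ (x = v ∨ (x ∈ C i ∧ x ≠ u)) := by
    intro i u hu x
    constructor
    · intro h
      by_cases hxv : x = v
      · left; exact hxv
      · obtain ⟨j, hj⟩ := hcover x hxv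
        by_cases hji : j = i
        · subst hji; right; exact ⟨hj, fun he => G.irrefl (he ▸ h)⟩
        · exact absurd h (hcross i j (fun he => hji he.symm) u hu x hj)
    · rintro (rfl | ⟨hx, hxu⟩)
      · exact (hadj i u hu).symm
      · exact hclique i u hu x hx (Ne.symm hxu)
  -- decomposition of predCount
  have hdecomp : ∀ i : Fin r, ∀ u ∈ C i, predCount G σ u
      = ((C i).filter (fun w => σ w < σ u)).card + (if σ v < σ u then 1 else 0) := by
    intro i u hu
    rw [hpcard]
    by_cases hv : σ v < σ u
    · rw [if_pos hv]
      have hset : Finset.univ.filter (fun w => G.Adj u w ∧ σ w < σ u)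
          = insert v ((C i).filter (fun w => σ w < σ u)) := by
        ext w
        simp only [Finset.mem_filter, Finset.mem_univ, true_and, Finset.mem_insert]
        rw [hnbr i u hu w]
        constructor
        · rintro ⟨(rfl | ⟨hw, hwu⟩), hlt⟩
          · left; rfl
          · right; exact ⟨hw, hlt⟩
        · rintro (rfl | ⟨hw, hlt⟩)
          · exact ⟨Or.inl rfl, hv⟩
          · refine ⟨Or.inr ⟨hw, ?_⟩, hlt⟩
            intro he; subst he; exact lt_irrefl _ hlt
      rw [hset, Finset.card_insert_of_notMem]
      intro hvmem
      exact havoid i ((Finset.mem_filter.1 hvmem).1)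
    · rw [if_neg hv]
      have hset : Finset.univ.filter (fun w => G.Adj u w ∧ σ w < σ u)
          = (C i).filter (fun w => σ w < σ u) := by
        ext w
        simp only [Finset.mem_filter, Finset.mem_univ, true_and]
        rw [hnbr i u hu w]
        constructor
        · rintro ⟨(rfl | ⟨hw, hwu⟩), hlt⟩
          · exact absurd hlt hv
          · exact ⟨hw, hlt⟩
        · rintro ⟨hw, hlt⟩
          refine ⟨Or.inr ⟨hw, ?_⟩, hlt⟩
          intro he; subst he; exact lt_irrefl _ hlt
      rw [hset, Nat.add_zero]
  -- predCount + succCount = clique size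
  have hps : ∀ i : Fin r, ∀ u ∈ C i,
      predCount G σ u + succCount G σ u = (C i).card := by
    intro i u hu
    rw [hpcard, hscard]
    have hdisj2 : Disjoint (Finset.univ.filter (fun w => G.Adj u w ∧ σ w < σ u))
        (Finset.univ.filter (fun w => G.Adj u w ∧ σ u < σ w)) := by
      rw [Finset.disjoint_left]
      intro w h1 h2
      rw [Finset.mem_filter] at h1 h2
      exact lt_asymm h1.2.2 h2.2.2
    have hun : (Finset.univ.filter (fun w => G.Adj u w ∧ σ w < σ u))
        ∪ (Finset.univ.filter (fun w => G.Adj u w ∧ σ u < σ w))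
        = Finset.univ.filter (fun w => G.Adj u w) := by
      ext w
      simp only [Finset.mem_union, Finset.mem_filter, Finset.mem_univ, true_and]
      constructor
      · rintro (⟨h, _⟩ | ⟨h, _⟩) <;> exact h
      · intro h
        rcases (σ.injective.ne h.ne').lt_or_gt with hlt | hlt
        · exact Or.inl ⟨h, hlt⟩
        · exact Or.inr ⟨h, hlt⟩
    have := Finset.card_union_of_disjoint hdisj2
    rw [hun] at this
    rw [← this]
    have hN : Finset.univ.filter (fun w => G.Adj u w) = insert v ((C i).erase u) := by
      ext w
      simp only [Finset.mem_filter, Finset.mem_univ, true_and, Finset.mem_insert,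
        Finset.mem_erase]
      rw [hnbr i u hu w]
      constructor
      · rintro (rfl | ⟨hw, hwu⟩)
        · left; rfl
        · right; exact ⟨hwu, hw⟩
      · rintro (rfl | ⟨hwu, hw⟩)
        · left; rfl
        · right; exact ⟨hw, hwu⟩
    rw [hN, Finset.card_insert_of_notMem (fun hc => havoid i (Finset.mem_erase.1 hc).2),
      Finset.card_erase_of_mem hu]
    have : 0 < (C i).card := Finset.card_pos.2 ⟨u, hu⟩
    omega
  -- strict monotonicity of predCount along σ within a clique
  have hmono : ∀ i : Fin r, ∀ u ∈ C i, ∀ w ∈ C i, σ u < σ w →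
      predCount G σ u < predCount G σ w := by
    intro i u hu w hw hlt
    rw [hdecomp i u hu, hdecomp i w hw]
    have h1 : ((C i).filter (fun x => σ x < σ u)).card
        < ((C i).filter (fun x => σ x < σ w)).card := by
      apply Finset.card_lt_card
      constructor
      · intro x hx
        rw [Finset.mem_filter] at *
        exact ⟨hx.1, hx.2.trans hlt⟩
      · intro hc
        have := hc (Finset.mem_filter.2 ⟨hu, hlt⟩)
        exact lt_irrefl _ (Finset.mem_filter.1 this).2
    have h2 : (if σ v < σ u then 1 else 0) ≤ (if σ v < σ w then 1 else 0) := by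
      by_cases h : σ v < σ u
      · rw [if_pos h, if_pos (h.trans hlt)]
      · rw [if_neg h]
        exact Nat.zero_le _
    omega
  -- injectivity
  have hinj : ∀ i : Fin r, Set.InjOn (predCount G σ) (C i) := by
    intro i u hu w hw h
    by_contra hne
    rcases (σ.injective.ne hne).lt_or_gt with hlt | hlt
    · exact absurd h (Nat.ne_of_lt (hmono i u hu w hw hlt))
    · exact absurd h.symm (Nat.ne_of_lt (hmono i w hw u hu hlt))
  -- bound
  have hle : ∀ i : Fin r, ∀ u ∈ C i, predCount G σ u ≤ (C i).card := by
    intro i u hu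
    rw [hdecomp i u hu]
    have h1 : ((C i).filter (fun w => σ w < σ u)).card ≤ ((C i).erase u).card := by
      apply Finset.card_le_card
      intro x hx
      rw [Finset.mem_filter] at hx
      refine Finset.mem_erase.2 ⟨?_, hx.1⟩
      intro he; subst he; exact lt_irrefl _ hx.2
    rw [Finset.card_erase_of_mem hu] at h1
    have : 0 < (C i).card := Finset.card_pos.2 ⟨u, hu⟩
    split_ifs <;> omega
  -- per-clique bound
  have hclq : ∀ i : Fin r,
      ((C i).card:ℤ)^2/2 + ((C i).card:ℤ)%2
        ≤ ∑ u ∈ C i, |(predCount G σ u : ℤ) - (succCount G σ u : ℤ)| := by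
    intro i
    refine (keyIneq (C i) (predCount G σ) (hinj i) (hle i)).trans_eq
      (Finset.sum_congr rfl ?_)
    intro u hu
    have h3 : ((C i).card : ℤ) = (predCount G σ u : ℤ) + (succCount G σ u : ℤ) := by
      exact_mod_cast (hps i u hu).symm
    rw [h3]
    congr 1
    ring
  -- assembly
  have hpd : ((Finset.univ : Finset (Fin r)) : Set (Fin r)).PairwiseDisjoint C :=
    fun i _ j _ hij => hdisj i j hij
  calc ∑ i : Fin r, (((C i).card : ℤ) ^ 2 / 2 + ((C i).card : ℤ) % 2)
      ≤ ∑ i : Fin r, ∑ u ∈ C i, |(predCount G σ u : ℤ) - (succCount G σ u : ℤ)| :=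
        Finset.sum_le_sum (fun i _ => hclq i)
    _ = ∑ u ∈ (Finset.univ : Finset (Fin r)).biUnion C,
          |(predCount G σ u : ℤ) - (succCount G σ u : ℤ)| :=
        (Finset.sum_biUnion hpd).symm
    _ ≤ ∑ u : V, |(predCount G σ u : ℤ) - (succCount G σ u : ℤ)| :=
        Finset.sum_le_sum_of_subset_of_nonneg (Finset.subset_univ _)
          (fun u _ _ => abs_nonneg _)
    _ = imbalance G σ := rfl
end
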